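/- Let R be a commutative ring, A an Azumaya algebra over R, B an R-algebra (possibly noncommutative, with R mapping into the center of B), and f : A → B an R-algebra homomorphism such that B is generated as a ring by f(A) together with the centralizer C = {b ∈ B | f(a)·b = b·f(a) for all a ∈ A}. Then the R-linear map A ⊗_R C → B induced by a ⊗ c ↦ f(a)·c is bijective; in particular B is isomorphic to A ⊗_R C as a ring. -/

import Mathlib

open scoped TensorProduct

/-- The canonical `R`-linear map `A ⊗[R] Aᵐᵒᵖ →ₗ[R] End_R(A)` sending `a ⊗ b` to the
endomorphism `x ↦ a * x * b`. -/
noncomputable def mulLeftRight (R A : Type*) [CommRing R] [Ring A] [Algebra R A] :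
    A ⊗[R] Aᵐᵒᵖ →ₗ[R] Module.End R A :=
  TensorProduct.lift <| LinearMap.mk₂ R
    (fun a b => LinearMap.mulRight R b.unop ∘ₗ LinearMap.mulLeft R a)
    (fun a a' b => by ext x; simp [add_mul])
    (fun r a b => by ext x; simp [smul_mul_assoc])
    (fun a b b' => by ext x; simp [mul_add])
    (fun r a b => by ext x; simp [mul_smul_comm])

/-- `A` is an Azumaya algebra over the commutative ring `R`: it is a finitely generated,
projective and faithful `R`-module and the natural map `A ⊗[R] Aᵐᵒᵖ → End_R(A)`,
`a ⊗ b ↦ (x ↦ a * x * b)`, is bijective. -/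
def IsAzumayaAlgebra (R A : Type*) [CommRing R] [Ring A] [Algebra R A] : Prop :=
  Module.Finite R A ∧ Module.Projective R A ∧ FaithfulSMul R A ∧
    Function.Bijective (mulLeftRight R A)

section Aux

variable {R A B : Type*} [CommRing R] [Ring A] [Algebra R A] [Ring B] [Algebra R B]

/-- The action of `A ⊗[R] Aᵐᵒᵖ` on `B` through an algebra map `f : A →ₐ[R] B`:
`a ⊗ b` acts as `x ↦ f a * x * f b.unop`. -/
noncomputable def actL (f : A →ₐ[R] B) : A ⊗[R] Aᵐᵒᵖ →ₗ[R] Module.End R B :=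
  TensorProduct.lift <| LinearMap.mk₂ R
    (fun a b => LinearMap.mulRight R (f b.unop) ∘ₗ LinearMap.mulLeft R (f a))
    (fun a a' b => by ext x; simp [add_mul])
    (fun r a b => by ext x; simp [smul_mul_assoc])
    (fun a b b' => by ext x; simp [mul_add])
    (fun r a b => by ext x; simp [mul_smul_comm])

lemma actL_tmul (f : A →ₐ[R] B) (a : A) (b : Aᵐᵒᵖ) (x : B) :
    actL f (a ⊗ₜ[R] b) x = f a * x * f b.unop := rfl

lemma actL_id : actL (AlgHom.id R A) = mulLeftRight R A := rfl

lemma actL_one (f : A →ₐ[R] B) : actL f 1 = 1 := by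
  ext x
  simp [Algebra.TensorProduct.one_def, actL_tmul]

lemma actL_mul (f : A →ₐ[R] B) (u v : A ⊗[R] Aᵐᵒᵖ) :
    actL f (u * v) = actL f u * actL f v := by
  induction u using TensorProduct.induction_on with
  | zero => simp
  | add u₁ u₂ h₁ h₂ => simp [add_mul, h₁, h₂]
  | tmul a b =>
    induction v using TensorProduct.induction_on with
    | zero => simp
    | add v₁ v₂ h₁ h₂ => simp [mul_add, h₁, h₂]
    | tmul c d =>
      rw [Algebra.TensorProduct.tmul_mul_tmul]
      ext x
      simp [actL_tmul, Module.End.mul_apply, map_mul, mul_assoc]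

lemma actL_f (f : A →ₐ[R] B) (u : A ⊗[R] Aᵐᵒᵖ) (x : A) :
    actL f u (f x) = f (mulLeftRight R A u x) := by
  induction u using TensorProduct.induction_on with
  | zero => simp
  | add u₁ u₂ h₁ h₂ => simp [map_add, h₁, h₂]
  | tmul a b =>
    show f a * f x * f b.unop = f (a * x * b.unop)
    simp [map_mul]

lemma actL_mul_comm (f : A →ₐ[R] B) (u : A ⊗[R] Aᵐᵒᵖ) (b c : B)
    (hc : ∀ x : A, c * f x = f x * c) :
    actL f u (b * c) = actL f u b * c := by
  induction u using TensorProduct.induction_on with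
  | zero => simp
  | add u₁ u₂ h₁ h₂ => simp [map_add, LinearMap.add_apply, h₁, h₂, add_mul]
  | tmul a d =>
    show f a * (b * c) * f d.unop = f a * b * f d.unop * c
    rw [mul_assoc (f a * b), ← hc d.unop, ← mul_assoc, ← mul_assoc]

end Aux

/-- Let `A` be an Azumaya algebra over a commutative ring `R`, let `B` be an `R`-algebra
and `f : A →ₐ[R] B` an `R`-algebra homomorphism such that `B` is generated as a ring by
`f(A)` together with the centralizer `C` of `f(A)` in `B`. Then the canonical map
`A ⊗[R] C → B`, `a ⊗ c ↦ f(a) * c`, is bijective. -/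
theorem azumaya_tensor_centralizer_bijective {R A B : Type*} [CommRing R]
    [Ring A] [Algebra R A] [Ring B] [Algebra R B]
    (hAz : IsAzumayaAlgebra R A) (f : A →ₐ[R] B)
    (hgen : Subring.closure (Set.range f ∪ Set.centralizer (Set.range f)) = ⊤) :
    Function.Bijective
      (Algebra.TensorProduct.lift f (Subalgebra.centralizer R (Set.range f)).val
        (fun a c => by exact (Subalgebra.mem_centralizer_iff R).mp c.2 (f a) ⟨a, rfl⟩)) := by
  classical
  obtain ⟨hfin, hproj, hfaith, hbij⟩ := hAz
  set C := Subalgebra.centralizer R (Set.range f) with hC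
  let G : A ⊗[R] C →ₐ[R] B := Algebra.TensorProduct.lift f C.val
    (fun a c => (Subalgebra.mem_centralizer_iff R).mp c.2 (f a) ⟨a, rfl⟩)
  show Function.Bijective ⇑G
  have hG : ∀ (x : A) (c : C), G (x ⊗ₜ c) = f x * (c : B) := fun x c => by
    simp [G, Algebra.TensorProduct.lift_tmul]
    exact Algebra.TensorProduct.lift_tmul ..
  -- commutation facts for elements of C
  have hCcomm : ∀ (c : C) (x : A), (c : B) * f x = f x * (c : B) := fun c x =>
    ((Subalgebra.mem_centralizer_iff R).mp c.2 (f x) ⟨x, rfl⟩).symm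
  -- dual basis
  obtain ⟨n, π, s, hπ, hs, hcomp⟩ := Module.Finite.exists_comp_eq_id_of_projective R A
  let a : Fin n → A := fun i => π (Pi.single i 1)
  let φ : Fin n → (A →ₗ[R] R) := fun i => LinearMap.proj i ∘ₗ s
  have hdual : ∀ x : A, ∑ i, φ i x • a i = x := by
    intro x
    have h1 : ∑ i, φ i x • a i = π (∑ i, s x i • (Pi.single i 1 : Fin n → R)) := by
      rw [map_sum]
      simp [a, φ, map_smul]
    have h2 : (∑ i, s x i • (Pi.single i 1 : Fin n → R)) = s x := by
      ext j
      simp [Finset.sum_apply, Pi.single_apply]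
    rw [h1, h2, ← LinearMap.comp_apply, hcomp, LinearMap.id_apply]
  -- the elements u i
  let T := LinearEquiv.ofBijective (mulLeftRight R A) hbij
  let u : Fin n → A ⊗[R] Aᵐᵒᵖ := fun i => T.symm ((φ i).smulRight 1)
  have hTu : ∀ i (x : A), mulLeftRight R A (u i) x = φ i x • 1 := by
    intro i x
    have : mulLeftRight R A (u i) = (φ i).smulRight 1 := T.apply_symm_apply _
    rw [this, LinearMap.smulRight_apply]
  -- key relation in A ⊗ Aᵐᵒᵖ
  have hrel : ∀ i (x : A),
      (x ⊗ₜ[R] (1 : Aᵐᵒᵖ)) * u i = ((1 : A) ⊗ₜ[R] MulOpposite.op x) * u i := by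
    intro i x
    apply hbij.1
    rw [← actL_id, actL_mul, actL_mul, actL_id]
    ext y
    simp only [Module.End.mul_apply, hTu, map_smul, LinearMap.smul_apply]
    rw [← actL_id, actL_tmul, actL_tmul]
    simp
  -- values of act (u i) lie in the centralizer
  have hmem : ∀ i (b : B), actL f (u i) b ∈ C := by
    intro i b
    rw [hC, Subalgebra.mem_centralizer_iff]
    rintro _ ⟨x, rfl⟩
    have h1 : f x * actL f (u i) b = actL f ((x ⊗ₜ[R] (1 : Aᵐᵒᵖ)) * u i) b := by
      rw [actL_mul]
      simp [Module.End.mul_apply, actL_tmul]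
    have h2 : actL f (u i) b * f x
        = actL f (((1 : A) ⊗ₜ[R] MulOpposite.op x) * u i) b := by
      rw [actL_mul]
      simp [Module.End.mul_apply, actL_tmul]
    rw [h1, h2, hrel]
  -- projections into C
  let p : Fin n → (B →ₗ[R] C) := fun i =>
    { toFun := fun b => ⟨actL f (u i) b, hmem i b⟩
      map_add' := fun b b' => by ext; simp
      map_smul' := fun r b => by ext; simp }
  have hp_coe : ∀ i (b : B), ((p i b : C) : B) = actL f (u i) b := fun i b => rfl
  -- key computation : p i (f x * c) = φ i x • c
  have hpkey : ∀ i (x : A) (c : C), p i (f x * (c : B)) = φ i x • c := by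
    intro i x c
    apply Subtype.ext
    rw [hp_coe]
    rw [actL_mul_comm f (u i) (f x) (c : B) (hCcomm c)]
    rw [actL_f, hTu]
    show f (φ i x • 1) * (c : B) = ((φ i x • c : C) : B)
    rw [map_smul, map_one, smul_mul_assoc, one_mul]
    rfl
  constructor
  · -- injectivity via explicit left inverse
    let h : B →ₗ[R] A ⊗[R] C :=
      ∑ i, (TensorProduct.mk R A C (a i)).comp (p i)
    have hinv : ∀ z : A ⊗[R] C, h (G z) = z := by
      intro z
      induction z using TensorProduct.induction_on with
      | zero => simp
      | add z₁ z₂ h₁ h₂ => rw [map_add, map_add, h₁, h₂]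
      | tmul x c =>
        rw [hG]
        show (∑ i, (TensorProduct.mk R A C (a i)).comp (p i)) (f x * (c:B)) = x ⊗ₜ c
        rw [LinearMap.sum_apply]
        have : ∀ i, ((TensorProduct.mk R A C (a i)).comp (p i)) (f x * (c:B))
            = (φ i x • a i) ⊗ₜ[R] c := by
          intro i
          rw [LinearMap.comp_apply, hpkey, TensorProduct.mk_apply,
            ← TensorProduct.smul_tmul]
        rw [Finset.sum_congr rfl (fun i _ => this i), ← TensorProduct.sum_tmul, hdual]
    exact Function.LeftInverse.injective hinv
  · -- surjectivity
    intro b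
    refine ⟨∑ i, a i ⊗ₜ[R] p i b, ?_⟩
    rw [map_sum]
    have hterm : ∀ i, G (a i ⊗ₜ[R] p i b)
        = actL f ((a i ⊗ₜ[R] (1 : Aᵐᵒᵖ)) * u i) b := by
      intro i
      rw [hG, hp_coe, actL_mul]
      simp [Module.End.mul_apply, actL_tmul]
    rw [Finset.sum_congr rfl (fun i _ => hterm i)]
    have hsum : (∑ i, actL f ((a i ⊗ₜ[R] (1 : Aᵐᵒᵖ)) * u i) b)
        = actL f (∑ i, (a i ⊗ₜ[R] (1 : Aᵐᵒᵖ)) * u i) b := by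
      rw [map_sum, LinearMap.sum_apply]
    have hone : (∑ i, (a i ⊗ₜ[R] (1 : Aᵐᵒᵖ)) * u i) = 1 := by
      apply hbij.1
      rw [map_sum]
      ext x
      have : ∀ i, mulLeftRight R A ((a i ⊗ₜ[R] (1 : Aᵐᵒᵖ)) * u i) x = φ i x • a i := by
        intro i
        rw [← actL_id, actL_mul, actL_id, Module.End.mul_apply, hTu, map_smul]
        rw [← actL_id]
        show (φ i x) • (actL (AlgHom.id R A) (a i ⊗ₜ[R] (1:Aᵐᵒᵖ)) 1) = φ i x • a i
        rw [actL_tmul]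
        simp
      simp only [LinearMap.coe_sum, Finset.sum_apply, this]
      rw [hdual, ← actL_id, Algebra.TensorProduct.one_def, actL_tmul]
      simp only [AlgHom.coe_id, id_eq, MulOpposite.unop_one, one_mul, mul_one]
    rw [hsum, hone, actL_one]
    rfl
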